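/- Let a, b, c, n be positive integers with a² + b² = 2c², and d₁, d₂, d₃ nonzero square-free integers with d₁d₂d₃ a perfect square. The system -b²n t² + d₂u₂² - d₃u₃² = 0, -a²n t² + d₃u₃² - d₁u₁² = 0, 2c²n t² + d₁u₁² - d₂u₂² = 0 has a nonzero real solution if and only if d₂ > 0. -/

import Mathlib

set_option maxHeartbeats 1000000 in
/-- the homogeneous space has a nonzero real point iff d₂ > 0. -/
theorem stmt6 (a b c n : ℕ) (ha : 0 < a) (hb : 0 < b) (hc : 0 < c) (hn : 0 < n)
    (h : a ^ 2 + b ^ 2 = 2 * c ^ 2)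
    (d₁ d₂ d₃ : ℤ) (h1 : Squarefree d₁) (h2 : Squarefree d₂) (h3 : Squarefree d₃)
    (hne1 : d₁ ≠ 0) (hne2 : d₂ ≠ 0) (hne3 : d₃ ≠ 0)
    (hsq : ∃ m : ℤ, d₁ * d₂ * d₃ = m ^ 2) :
    (∃ t u₁ u₂ u₃ : ℝ, ¬(t = 0 ∧ u₁ = 0 ∧ u₂ = 0 ∧ u₃ = 0) ∧
      -(b : ℝ) ^ 2 * (n : ℝ) * t ^ 2 + (d₂ : ℝ) * u₂ ^ 2 - (d₃ : ℝ) * u₃ ^ 2 = 0 ∧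
      -(a : ℝ) ^ 2 * (n : ℝ) * t ^ 2 + (d₃ : ℝ) * u₃ ^ 2 - (d₁ : ℝ) * u₁ ^ 2 = 0 ∧
      2 * (c : ℝ) ^ 2 * (n : ℝ) * t ^ 2 + (d₁ : ℝ) * u₁ ^ 2 - (d₂ : ℝ) * u₂ ^ 2 = 0)
    ↔ 0 < d₂ := by
  obtain ⟨m, hm⟩ := hsq
  have hmne : m ≠ 0 := by
    intro hm0
    rw [hm0] at hm
    simp at hm
    rcases hm with (h' | h') | h' <;> simp_all
  have hprod : 0 < d₁ * d₂ * d₃ := by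
    rw [hm]; positivity
  have haR : (0:ℝ) < a := by exact_mod_cast ha
  have hbR : (0:ℝ) < b := by exact_mod_cast hb
  have hcR : (0:ℝ) < c := by exact_mod_cast hc
  have hnR : (0:ℝ) < n := by exact_mod_cast hn
  have hR : (a:ℝ) ^ 2 + (b:ℝ) ^ 2 = 2 * (c:ℝ) ^ 2 := by exact_mod_cast h
  constructor
  · rintro ⟨t, u₁, u₂, u₃, hnz, e1, e2, e3⟩
    by_contra hd2
    push_neg at hd2
    have hd2' : d₂ < 0 := lt_of_le_of_ne hd2 hne2
    have hd2R : (d₂:ℝ) < 0 := by exact_mod_cast hd2'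
    have h13 : d₁ * d₃ < 0 := by nlinarith
    have hC : (d₂:ℝ) * u₂ ^ 2 ≤ 0 := mul_nonpos_of_nonpos_of_nonneg hd2R.le (sq_nonneg _)
    rcases lt_or_gt_of_ne hne1 with hd1 | hd1
    · -- d₁ < 0, then d₃ > 0; use e1
      have hd3 : 0 < d₃ := by nlinarith
      have hd1R : (d₁:ℝ) < 0 := by exact_mod_cast hd1
      have hd3R : (0:ℝ) < d₃ := by exact_mod_cast hd3
      have hA : (0:ℝ) ≤ (b:ℝ) ^ 2 * n * t ^ 2 := by positivity
      have hB : (0:ℝ) ≤ (d₃:ℝ) * u₃ ^ 2 := mul_nonneg hd3R.le (sq_nonneg _)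
      have hA0 : (b:ℝ) ^ 2 * n * t ^ 2 = 0 := by linarith
      have hB0 : (d₃:ℝ) * u₃ ^ 2 = 0 := by linarith
      have hC0 : (d₂:ℝ) * u₂ ^ 2 = 0 := by linarith
      have ht : t = 0 := by
        have h' : t ^ 2 = 0 := by
          rcases mul_eq_zero.mp hA0 with h' | h'
          · exact absurd h' (by positivity)
          · exact h'
        exact (pow_eq_zero_iff two_ne_zero).mp h'
      have hu3 : u₃ = 0 := by
        have h' : u₃ ^ 2 = 0 := (mul_eq_zero.mp hB0).resolve_left hd3R.ne'
        exact (pow_eq_zero_iff two_ne_zero).mp h'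
      have hu2 : u₂ = 0 := by
        have h' : u₂ ^ 2 = 0 := (mul_eq_zero.mp hC0).resolve_left hd2R.ne
        exact (pow_eq_zero_iff two_ne_zero).mp h'
      have hu1 : u₁ = 0 := by
        have h' : (d₁:ℝ) * u₁ ^ 2 = 0 := by
          rw [ht, hu3] at e2; linear_combination -e2
        have h'' : u₁ ^ 2 = 0 := (mul_eq_zero.mp h').resolve_left hd1R.ne
        exact (pow_eq_zero_iff two_ne_zero).mp h''
      exact hnz ⟨ht, hu1, hu2, hu3⟩
    · -- d₁ > 0, then d₃ < 0; use e3
      have hd3 : d₃ < 0 := by nlinarith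
      have hd1R : (0:ℝ) < d₁ := by exact_mod_cast hd1
      have hd3R : (d₃:ℝ) < 0 := by exact_mod_cast hd3
      have hA : (0:ℝ) ≤ 2 * (c:ℝ) ^ 2 * n * t ^ 2 := by positivity
      have hB : (0:ℝ) ≤ (d₁:ℝ) * u₁ ^ 2 := mul_nonneg hd1R.le (sq_nonneg _)
      have hA0 : 2 * (c:ℝ) ^ 2 * n * t ^ 2 = 0 := by linarith
      have hB0 : (d₁:ℝ) * u₁ ^ 2 = 0 := by linarith
      have hC0 : (d₂:ℝ) * u₂ ^ 2 = 0 := by linarith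
      have ht : t = 0 := by
        have h' : t ^ 2 = 0 := by
          rcases mul_eq_zero.mp hA0 with h' | h'
          · exact absurd h' (by positivity)
          · exact h'
        exact (pow_eq_zero_iff two_ne_zero).mp h'
      have hu1 : u₁ = 0 := by
        have h' : u₁ ^ 2 = 0 := (mul_eq_zero.mp hB0).resolve_left hd1R.ne'
        exact (pow_eq_zero_iff two_ne_zero).mp h'
      have hu2 : u₂ = 0 := by
        have h' : u₂ ^ 2 = 0 := (mul_eq_zero.mp hC0).resolve_left hd2R.ne
        exact (pow_eq_zero_iff two_ne_zero).mp h'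
      have hu3 : u₃ = 0 := by
        have h' : (d₃:ℝ) * u₃ ^ 2 = 0 := by
          rw [ht, hu1] at e2; linear_combination e2
        have h'' : u₃ ^ 2 = 0 := (mul_eq_zero.mp h').resolve_left hd3R.ne
        exact (pow_eq_zero_iff two_ne_zero).mp h''
      exact hnz ⟨ht, hu1, hu2, hu3⟩
  · intro hd2
    have hd2R : (0:ℝ) < d₂ := by exact_mod_cast hd2
    have h13 : 0 < d₁ * d₃ := by nlinarith
    rcases lt_or_gt_of_ne hne1 with hd1 | hd1
    · -- d₁ < 0, d₃ < 0 : t = 1, u₃ = 0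
      have hd3 : d₃ < 0 := by nlinarith
      have hd1R : (d₁:ℝ) < 0 := by exact_mod_cast hd1
      have hd1ne : (d₁:ℝ) ≠ 0 := hd1R.ne
      have hd2ne : (d₂:ℝ) ≠ 0 := hd2R.ne'
      have hnn1 : (0:ℝ) ≤ -((a:ℝ)^2*n/d₁) := by
        rw [neg_nonneg]
        exact div_nonpos_of_nonneg_of_nonpos (by positivity) hd1R.le
      have hu1 : (d₁:ℝ) * (Real.sqrt (-((a:ℝ)^2*n/d₁))) ^ 2 = -((a:ℝ)^2*n) := by
        rw [Real.sq_sqrt hnn1]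
        field_simp
      have hu2 : (d₂:ℝ) * (Real.sqrt ((b:ℝ)^2*n/d₂)) ^ 2 = (b:ℝ)^2*n := by
        rw [Real.sq_sqrt (by positivity)]
        field_simp
      exact ⟨1, Real.sqrt (-((a:ℝ)^2*n/d₁)), Real.sqrt ((b:ℝ)^2*n/d₂), 0, by simp,
        by linarith [hu1, hu2], by linarith [hu1, hu2], by nlinarith [hu1, hu2, hR]⟩
    · -- d₁ > 0, d₃ > 0 : t = 1, u₁ = 0
      have hd3 : 0 < d₃ := by nlinarith
      have hd3R : (0:ℝ) < d₃ := by exact_mod_cast hd3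
      have hu2 : (d₂:ℝ) * (Real.sqrt (((a:ℝ)^2+(b:ℝ)^2)*n/d₂)) ^ 2 = ((a:ℝ)^2+(b:ℝ)^2)*n := by
        rw [Real.sq_sqrt (by positivity)]
        field_simp
      have hu3 : (d₃:ℝ) * (Real.sqrt ((a:ℝ)^2*n/d₃)) ^ 2 = (a:ℝ)^2*n := by
        rw [Real.sq_sqrt (by positivity)]
        field_simp
      exact ⟨1, 0, Real.sqrt (((a:ℝ)^2+(b:ℝ)^2)*n/d₂), Real.sqrt ((a:ℝ)^2*n/d₃), by simp,
        by linarith [hu2, hu3], by linarith [hu2, hu3], by nlinarith [hu2, hu3, hR]⟩
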